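/- Let \lambda \in B^{(n)} be homogeneous of degree d, let k < n, and suppose that multiplication by \lambda from the degree-k component B^{(n)}_k to B^{(n)}_{k+d} is injective. Then multiplication by \lambda from B^{(n)}_{k-1} to B^{(n)}_{k-1+d} is also injective. -/

import Mathlib

open MvPolynomial

noncomputable def squaresIdeal (n : ℕ) : Ideal (MvPolynomial (Fin n) (ZMod 2)) :=
  Ideal.span (Set.range fun i : Fin n => (X i : MvPolynomial (Fin n) (ZMod 2)) ^ 2)

abbrev B (n : ℕ) := MvPolynomial (Fin n) (ZMod 2) ⧸ squaresIdeal n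

noncomputable def Bmk (n : ℕ) : MvPolynomial (Fin n) (ZMod 2) →+* B n :=
  Ideal.Quotient.mk (squaresIdeal n)

noncomputable def Bcomp (n k : ℕ) : Submodule (ZMod 2) (B n) :=
  (homogeneousSubmodule (Fin n) (ZMod 2) k).map
    (Ideal.Quotient.mkₐ (ZMod 2) (squaresIdeal n)).toLinearMap

noncomputable def psymm (n : ℕ) (S : Finset (Fin n)) (j : ℕ) :
    MvPolynomial (Fin n) (ZMod 2) :=
  ∑ t ∈ S.powersetCard j, ∏ i ∈ t, X i

lemma mem_squaresIdeal_iff {n : ℕ} (q : MvPolynomial (Fin n) (ZMod 2)) :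
    q ∈ squaresIdeal n ↔ ∀ m ∈ q.support, ∃ i, 2 ≤ m i := by
  have h : squaresIdeal n =
      Ideal.span ((fun s => monomial s (1 : ZMod 2)) ''
        (Set.range fun i : Fin n => Finsupp.single i 2)) := by
    unfold squaresIdeal
    congr 1
    rw [← Set.range_comp]
    apply congrArg
    funext i
    simp [Function.comp, X_pow_eq_monomial]
  rw [h, mem_ideal_span_monomial_image]
  constructor
  · intro h m hm
    obtain ⟨si, hsi, hle⟩ := h m hm
    obtain ⟨i, rfl⟩ := hsi
    exact ⟨i, by simpa using (Finsupp.single_le_iff).mp hle⟩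
  · intro h m hm
    obtain ⟨i, hi⟩ := h m hm
    exact ⟨Finsupp.single i 2, ⟨i, rfl⟩, Finsupp.single_le_iff.mpr hi⟩

theorem mul_injective_of_lower (n d k : ℕ) (hk : k < n) (hk1 : 1 ≤ k)
    (p : MvPolynomial (Fin n) (ZMod 2)) (hp : p.IsHomogeneous d)
    (hinj : ∀ μ ∈ Bcomp n k, Bmk n p * μ = 0 → μ = 0) :
    ∀ μ ∈ Bcomp n (k - 1), Bmk n p * μ = 0 → μ = 0 := by
  intro μ hμ hμ0
  obtain ⟨q, hq, rfl⟩ := hμ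
  replace hq : q.IsHomogeneous (k - 1) := hq
  have hBmk : ∀ r : MvPolynomial (Fin n) (ZMod 2),
      (Ideal.Quotient.mkₐ (ZMod 2) (squaresIdeal n)).toLinearMap r = Bmk n r := fun _ => rfl
  rw [hBmk] at hμ0 ⊢
  rw [show (0 : B n) = Bmk n 0 from (map_zero _).symm, Bmk]
  rw [Ideal.Quotient.mk_eq_mk_iff_sub_mem, sub_zero]
  -- key : each `X i * q` lies in the ideal
  have key : ∀ i : Fin n, X i * q ∈ squaresIdeal n := by
    intro i
    have hhom : (X i * q).IsHomogeneous k := by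
      have := (isHomogeneous_X (ZMod 2) i).mul hq
      convert this using 1
      omega
    have hmem : Bmk n (X i * q) ∈ Bcomp n k :=
      ⟨X i * q, (mem_homogeneousSubmodule _ _).mpr hhom, rfl⟩
    have h0 : Bmk n p * Bmk n (X i * q) = 0 := by
      rw [map_mul]
      calc Bmk n p * (Bmk n (X i) * Bmk n q)
          = Bmk n (X i) * (Bmk n p * Bmk n q) := by ring
        _ = 0 := by rw [hμ0, mul_zero]
    have := hinj _ hmem h0
    exact (Ideal.Quotient.eq_zero_iff_mem).mp this
  -- conclude q ∈ squaresIdeal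
  rw [mem_squaresIdeal_iff]
  intro m hm
  by_contra hno
  push_neg at hno
  have hsf : ∀ i, m i ≤ 1 := fun i => by have := hno i; omega
  -- degree of m is k - 1
  have hdeg : m.degree = k - 1 := by
    rw [Finsupp.degree_eq_weight_one]
    exact hq (mem_support_iff.mp hm)
  -- there is a variable not in m
  have hzero : ∃ i, m i = 0 := by
    by_contra hz
    push_neg at hz
    have hsupp : m.support = Finset.univ := by
      ext i; simp [Finsupp.mem_support_iff, hz i]
    have : n ≤ m.degree := by
      rw [Finsupp.degree_apply, hsupp]
      calc n = ∑ _i : Fin n, 1 := by simp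
        _ ≤ ∑ i : Fin n, m i := Finset.sum_le_sum fun i _ => Nat.one_le_iff_ne_zero.mpr (hz i)
    omega
  obtain ⟨i, hi⟩ := hzero
  have hm' : Finsupp.single i 1 + m ∈ (X i * q).support := by
    rw [mem_support_iff, coeff_X_mul]
    exact mem_support_iff.mp hm
  obtain ⟨j, hj⟩ := (mem_squaresIdeal_iff _).mp (key i) _ hm'
  rcases eq_or_ne j i with rfl | hne
  · simp [Finsupp.single_apply, hi] at hj
  · rw [Finsupp.add_apply, Finsupp.single_apply, if_neg (by exact fun h => hne h.symm)] at hj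
    have := hsf j
    omega
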